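/- Under assumptions (H0), (H1), (H2), for any balance c of the H₁-system and any j = 1,…,k, the row vector dH_j(c) satisfies dH_j(c)·(K(c) − h_j·Id) = 0, where K(c) is the Kovalevskaya matrix. In particular, if dH_j(c) ≠ 0 then h_j is a Kovalevskaya exponent at c. -/

import Mathlib

open MvPolynomial

lemma pderiv_bind₁_chain {σ τ : Type*} [Fintype σ] [DecidableEq σ] [DecidableEq τ]
    (f : σ → MvPolynomial τ ℂ) (t : τ) (P : MvPolynomial σ ℂ) :
    pderiv t (bind₁ f P) = ∑ j, bind₁ f (pderiv j P) * pderiv t (f j) := by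
  induction P using MvPolynomial.induction_on with
  | C r => simp
  | add p q hp hq =>
      simp [hp, hq, add_mul, Finset.sum_add_distrib]
  | mul_X p j hp =>
      have step : ∀ i : σ, bind₁ f (pderiv i (p * X j)) * pderiv t (f i)
          = bind₁ f (pderiv i p) * pderiv t (f i) * f j
            + (if i = j then bind₁ f p * pderiv t (f i) else 0) := by
        intro i
        rw [pderiv_mul, pderiv_X]
        by_cases hij : i = j <;> simp [hij, Pi.single_apply] <;> ring
      calc pderiv t (bind₁ f (p * X j))
          = pderiv t (bind₁ f p * f j) := by rw [map_mul, bind₁_X_right]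
        _ = pderiv t (bind₁ f p) * f j + bind₁ f p * pderiv t (f j) := pderiv_mul
        _ = (∑ i, bind₁ f (pderiv i p) * pderiv t (f i)) * f j
              + bind₁ f p * pderiv t (f j) := by rw [hp]
        _ = ∑ i, bind₁ f (pderiv i (p * X j)) * pderiv t (f i) := by
              rw [Finset.sum_congr rfl fun i _ => step i]
              simp [Finset.sum_add_distrib, Finset.sum_ite_eq', Finset.sum_mul]

open MvPolynomial

private lemma aeval_eq_eval_c {σ : Type*} (y : σ → ℂ) (p : MvPolynomial σ ℂ) :
    aeval y p = eval y p := by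
  rw [← coe_aeval_eq_eval]; rfl

private lemma pderiv_none_rename_some {σ : Type*} (P : MvPolynomial σ ℂ) :
    pderiv (none : Option σ) (rename (some : σ → Option σ) P) = 0 := by
  classical
  induction P using MvPolynomial.induction_on with
  | C r => simp
  | add p q hp hq => simp [hp, hq]
  | mul_X p j hp =>
      rw [map_mul, pderiv_mul, hp, rename_X]
      simp [pderiv_X, Pi.single_apply]

private lemma euler_identity {σ : Type*} [Fintype σ] [DecidableEq σ]
    (w : σ → ℕ) (N : ℕ) (P : MvPolynomial σ ℂ)
    (hsc : ∀ (t : ℂ) (x : σ → ℂ), eval (fun j => t ^ w j * x j) P = t ^ N * eval x P) :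
    ∑ j, pderiv j P * (C (w j : ℂ) * X j) = C (N : ℂ) * P := by
  classical
  set f : σ → MvPolynomial (Option σ) ℂ := fun j => X (some j) * X none ^ w j with hf
  set g : Option σ → MvPolynomial σ ℂ := fun o => o.elim 1 X with hg
  have claim1 : bind₁ f P = X (none : Option σ) ^ N * rename some P := by
    apply MvPolynomial.funext
    intro y
    have h1 : eval y (bind₁ f P) = eval (fun j => y none ^ w j * y (some j)) P := by
      rw [← aeval_eq_eval_c, aeval_bind₁]
      have he : (fun i => aeval y (f i)) = (fun j => y none ^ w j * y (some j)) := by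
        funext j
        simp [hf, aeval_eq_eval_c]
        ring
      rw [he, aeval_eq_eval_c]
    rw [h1, hsc (y none) (fun j => y (some j)), map_mul, map_pow, eval_X, eval_rename]
    rfl
  have d1 := pderiv_bind₁_chain f none P
  rw [claim1, pderiv_mul, pderiv_none_rename_some, mul_zero, add_zero, pderiv_pow,
    pderiv_X_self, mul_one] at d1
  have d2 := congrArg (aeval g) d1
  rw [map_mul, map_mul, map_pow, map_natCast, aeval_X] at d2
  have hgnone : g none = 1 := rfl
  rw [hgnone, one_pow, mul_one] at d2
  have hren : aeval g (rename (some : σ → Option σ) P) = P := by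
    rw [aeval_rename]
    have : (g ∘ some) = (X : σ → MvPolynomial σ ℂ) := rfl
    rw [this, aeval_X_left_apply]
  rw [hren, map_sum] at d2
  have hterm : ∀ j, aeval g (bind₁ f (pderiv j P) * pderiv none (f j))
      = pderiv j P * (C (w j : ℂ) * X j) := by
    intro j
    rw [map_mul]
    have hb : aeval g (bind₁ f (pderiv j P)) = pderiv j P := by
      rw [aeval_bind₁]
      have : (fun i => aeval g (f i)) = (X : σ → MvPolynomial σ ℂ) := by
        funext i; simp [hf, hg]
      rw [this, aeval_X_left_apply]
    rw [hb]
    refine congrArg (pderiv j P * ·) ?_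
    rw [hf]
    simp [pderiv_mul, pderiv_pow, pderiv_X_self, pderiv_X, Pi.single_apply, hg]
    push_cast
    ring
  rw [Finset.sum_congr rfl fun j _ => hterm j] at d2
  rw [← d2, show (C ((N : ℂ)) : MvPolynomial σ ℂ) = ((N : ℕ) : MvPolynomial σ ℂ) from
    map_natCast (C : ℂ →+* MvPolynomial σ ℂ) N, mul_comm]

/-- Theorem 4.5 (Yoshida): for a balance `c` of the `H₁`-system,
`dH_j(c)·(K(c) − h_j·Id) = 0`; in particular, if `dH_j(c) ≠ 0`, then `h_j` is a
Kovalevskaya exponent. -/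
theorem gradient_left_eigenvector (m k : ℕ) (hk : 0 < k)
    (a b : Fin m → ℕ) (h : Fin k → ℕ)
    (H : Fin k → MvPolynomial (Fin m ⊕ Fin m) ℂ)
    -- (H0) pairwise Poisson commutation
    (hH0 : ∀ (s t : Fin k) (x : Fin m ⊕ Fin m → ℂ),
      (∑ i, (eval x (pderiv (Sum.inl i) (H s)) * eval x (pderiv (Sum.inr i) (H t)) -
        eval x (pderiv (Sum.inl i) (H t)) * eval x (pderiv (Sum.inr i) (H s)))) = 0)
    -- (H1) quasihomogeneity
    (hH1 : ∀ (s : Fin k) (t : ℂ) (x : Fin m ⊕ Fin m → ℂ),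
      eval (fun j => t ^ Sum.elim a b j * x j) (H s) = t ^ h s * eval x (H s))
    -- (H2)
    (hH2 : ∀ j, a j + b j + 1 = h ⟨0, hk⟩)
    -- balance of the H₁-system
    (c : Fin m ⊕ Fin m → ℂ)
    (hbalp : ∀ i, eval c (pderiv (Sum.inr i) (H ⟨0, hk⟩)) = -(a i : ℂ) * c (Sum.inl i))
    (hbalq : ∀ i, eval c (pderiv (Sum.inl i) (H ⟨0, hk⟩)) = (b i : ℂ) * c (Sum.inr i)) :
    ∀ F : Fin m ⊕ Fin m → MvPolynomial (Fin m ⊕ Fin m) ℂ,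
      F = Sum.elim (fun i => pderiv (Sum.inr i) (H ⟨0, hk⟩))
        (fun i => -pderiv (Sum.inl i) (H ⟨0, hk⟩)) →
    ∀ K : Matrix (Fin m ⊕ Fin m) (Fin m ⊕ Fin m) ℂ,
      K = Matrix.of (fun j l => eval c (pderiv l (F j)) +
        if j = l then ((Sum.elim a b j : ℕ) : ℂ) else 0) →
    ∀ s : Fin k,
      Matrix.vecMul (fun j => eval c (pderiv j (H s))) (K - (h s : ℂ) • 1) = 0 ∧
      ((fun j => eval c (pderiv j (H s))) ≠ 0 → (h s : ℂ) ∈ spectrum ℂ K) := by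
  intro F hF K hK s
  classical
  -- Poisson polynomial identity
  have hpois : (∑ j : Fin m ⊕ Fin m, pderiv j (H s) * F j) = 0 := by
    apply MvPolynomial.funext
    intro x
    have h0 := hH0 s ⟨0, hk⟩ x
    rw [map_sum, map_zero, Fintype.sum_sum_type, ← Finset.sum_add_distrib, ← h0]
    refine Finset.sum_congr rfl fun i _ => ?_
    rw [hF]
    simp only [Sum.elim_inl, Sum.elim_inr, map_mul, map_neg]
    ring
  -- Euler identity
  have heuler : ∑ j, pderiv j (H s) * (C ((Sum.elim a b j : ℕ) : ℂ) * X j)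
      = C ((h s : ℕ) : ℂ) * H s :=
    euler_identity (Sum.elim a b) (h s) (H s) (fun t x => hH1 s t x)
  -- first-order consequence of Euler at the balance
  have E1 : ∀ l, (∑ j, eval c (pderiv l (pderiv j (H s))) * (((Sum.elim a b j : ℕ) : ℂ) * c j))
      + ((Sum.elim a b l : ℕ) : ℂ) * eval c (pderiv l (H s))
      = ((h s : ℕ) : ℂ) * eval c (pderiv l (H s)) := by
    intro l
    have e1term : ∀ j : Fin m ⊕ Fin m,
        eval c (pderiv l (pderiv j (H s) * (C ((Sum.elim a b j : ℕ) : ℂ) * X j)))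
        = eval c (pderiv l (pderiv j (H s))) * (((Sum.elim a b j : ℕ) : ℂ) * c j)
          + (if j = l then ((Sum.elim a b j : ℕ) : ℂ) * eval c (pderiv j (H s)) else 0) := by
      intro j
      by_cases hj : j = l
      · subst hj
        simp [pderiv_mul, pderiv_C, pderiv_X_self]
        ring
      · simp [pderiv_mul, pderiv_C, pderiv_X, Pi.single_apply, hj]
        ring
    have e1 := congrArg (eval c) (congrArg (pderiv l) heuler)
    rw [map_sum, map_sum] at e1
    rw [Finset.sum_congr rfl fun j _ => e1term j, Finset.sum_add_distrib,
      Finset.sum_ite_eq' Finset.univ l, if_pos (Finset.mem_univ l)] at e1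
    have hrhs : eval c (pderiv l (C ((h s : ℕ) : ℂ) * H s))
        = ((h s : ℕ) : ℂ) * eval c (pderiv l (H s)) := by
      simp [pderiv_mul, pderiv_C]
    rw [hrhs] at e1
    exact e1
  -- value of F at the balance
  have hFc : ∀ j, eval c (F j) = -(((Sum.elim a b j : ℕ) : ℂ)) * c j := by
    intro j
    rw [hF]
    cases j with
    | inl i => simpa using hbalp i
    | inr i =>
        simp only [Sum.elim_inr, map_neg]
        rw [hbalq i]

        ring
  -- consequence of Poisson commutation at the balance
  have E2 : ∀ l, (∑ j, eval c (pderiv j (H s)) * eval c (pderiv l (F j)))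
      = ∑ j, eval c (pderiv l (pderiv j (H s))) * (((Sum.elim a b j : ℕ) : ℂ) * c j) := by
    intro l
    have e2 := congrArg (eval c) (congrArg (pderiv l) hpois)
    rw [map_sum, map_sum, map_zero, map_zero] at e2
    have e2term : ∀ j, eval c (pderiv l (pderiv j (H s) * F j))
        = eval c (pderiv j (H s)) * eval c (pderiv l (F j))
          - eval c (pderiv l (pderiv j (H s))) * (((Sum.elim a b j : ℕ) : ℂ) * c j) := by
      intro j
      rw [pderiv_mul, map_add, map_mul, map_mul, hFc j]
      ring
    rw [Finset.sum_congr rfl fun j _ => e2term j, Finset.sum_sub_distrib] at e2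
    linear_combination e2
  -- the key computation
  have Skey : ∀ l, (∑ j, eval c (pderiv j (H s)) * eval c (pderiv l (F j)))
      = ((h s : ℕ) : ℂ) * eval c (pderiv l (H s))
        - ((Sum.elim a b l : ℕ) : ℂ) * eval c (pderiv l (H s)) := by
    intro l
    rw [E2 l]
    linear_combination E1 l
  have hmain : Matrix.vecMul (fun j => eval c (pderiv j (H s))) (K - (h s : ℂ) • 1) = 0 := by
    funext l
    have split : ∀ j : Fin m ⊕ Fin m,
        eval c (pderiv j (H s)) * ((K - (h s : ℂ) • 1) j l)
        = eval c (pderiv j (H s)) * eval c (pderiv l (F j))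
          + (if j = l then (((Sum.elim a b j : ℕ) : ℂ) - ((h s : ℕ) : ℂ)) *
              eval c (pderiv j (H s)) else 0) := by
      intro j
      rw [hK]
      by_cases hj : j = l
      · subst hj
        simp only [Matrix.sub_apply, Matrix.smul_apply, Matrix.one_apply_eq, Matrix.of_apply,
          if_pos rfl, smul_eq_mul, mul_one, if_true]
        ring
      · simp [Matrix.sub_apply, Matrix.smul_apply, Matrix.one_apply, hj]
    show (∑ j, eval c (pderiv j (H s)) * ((K - (h s : ℂ) • 1) j l)) = 0
    rw [Finset.sum_congr rfl fun j _ => split j, Finset.sum_add_distrib,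
      Finset.sum_ite_eq' Finset.univ l, if_pos (Finset.mem_univ l), Skey l]
    ring
  refine ⟨hmain, fun hv => ?_⟩
  rw [spectrum.mem_iff]
  intro hunit
  apply hv
  obtain ⟨u, hu⟩ := hunit
  have hKh : (K - (h s : ℂ) • 1) = -(u : Matrix (Fin m ⊕ Fin m) (Fin m ⊕ Fin m) ℂ) := by
    rw [hu, Algebra.algebraMap_eq_smul_one]
    exact (neg_sub _ _).symm
  have h0 : Matrix.vecMul (fun j => eval c (pderiv j (H s)))
      (u : Matrix (Fin m ⊕ Fin m) (Fin m ⊕ Fin m) ℂ) = 0 := by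
    have h1 := hmain
    rw [hKh, Matrix.vecMul_neg, neg_eq_zero] at h1
    exact h1
  have h2 := congrArg
    (fun vv => Matrix.vecMul vv
      (((u⁻¹ : (Matrix (Fin m ⊕ Fin m) (Fin m ⊕ Fin m) ℂ)ˣ) :
        Matrix (Fin m ⊕ Fin m) (Fin m ⊕ Fin m) ℂ))) h0
  simp only [Matrix.vecMul_vecMul, Matrix.zero_vecMul] at h2
  rw [Units.mul_inv, Matrix.vecMul_one] at h2
  exact h2
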